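/- Let A be a Bott matrix in 𝔅(n). Then the involutions a_1,…,a_n of T^n associated with A commute pairwise, and the group G(A) they generate acts freely on T^n; concretely, for every nonempty subset S ⊆ {1,…,n} and every z ∈ T^n one has (∏_{i∈S} a_i)(z) ≠ z. -/

import Mathlib

open Matrix

/-- A Bott matrix: conjugate by a permutation matrix to a strictly upper
triangular binary matrix. -/
def IsBott {n : ℕ} (A : Matrix (Fin n) (Fin n) (ZMod 2)) : Prop :=
  ∃ (σ : Equiv.Perm (Fin n)) (B : Matrix (Fin n) (Fin n) (ZMod 2)),
    (∀ i j : Fin n, j ≤ i → B i j = 0) ∧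
    A = σ.permMatrix (ZMod 2) * B * (σ⁻¹).permMatrix (ZMod 2)

/-- `z(a)`: `z` if `a = 0` and the complex conjugate `z̄` if `a = 1`. -/
noncomputable def conjPow (a : ZMod 2) (z : ℂ) : ℂ :=
  if a = 0 then z else (starRingEnd ℂ) z

/-- The involution `a_i` of `T^n ⊆ ℂ^n` associated with a binary matrix `A`:
`a_i(z)_j = z_j(A^i_j)` for `j ≠ i` and `a_i(z)_i = -z_i`. -/
noncomputable def aMap {n : ℕ} (A : Matrix (Fin n) (Fin n) (ZMod 2)) (i : Fin n)
    (z : Fin n → ℂ) : Fin n → ℂ :=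
  fun j => if j = i then -z i else conjPow (A i j) (z j)

/-- The composition `∏_{i ∈ S} a_i` (taken in increasing order of indices). -/
noncomputable def prodMap {n : ℕ} (A : Matrix (Fin n) (Fin n) (ZMod 2))
    (S : Finset (Fin n)) : (Fin n → ℂ) → (Fin n → ℂ) :=
  (S.sort (· ≤ ·)).foldr (fun i f => aMap A i ∘ f) id

lemma conjPow_neg (a : ZMod 2) (z : ℂ) : conjPow a (-z) = -conjPow a z := by
  unfold conjPow; split_ifs <;> simp

lemma conjPow_zero (z : ℂ) : conjPow 0 z = z := by
  simp [conjPow]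

lemma conjPow_comm (a b : ZMod 2) (z : ℂ) :
    conjPow a (conjPow b z) = conjPow b (conjPow a z) := by
  unfold conjPow; split_ifs <;> rfl

lemma foldr_apply_eq {n : ℕ} (A : Matrix (Fin n) (Fin n) (ZMod 2))
    (L : List (Fin n)) (i₀ : Fin n) (z : Fin n → ℂ)
    (h : ∀ j ∈ L, A j i₀ = 0) :
    (L.foldr (fun i f => aMap A i ∘ f) id) z i₀ = (-1 : ℂ) ^ (L.count i₀) * z i₀ := by
  induction L with
  | nil => simp
  | cons j t ih =>
    have ht : ∀ j ∈ t, A j i₀ = 0 := fun j hj => h j (List.mem_cons_of_mem _ hj)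
    have hj0 : A j i₀ = 0 := h j List.mem_cons_self
    simp only [List.foldr_cons, Function.comp_apply, aMap]
    by_cases hij : i₀ = j
    · subst hij
      rw [if_pos rfl, ih ht, List.count_cons_self, pow_succ]
      ring
    · rw [if_neg hij, hj0, conjPow_zero, ih ht,
        List.count_cons_of_ne (Ne.symm hij)]

/-- For a Bott matrix `A`, the involutions `a_1, …, a_n` commute pairwise, and the
group `G(A)` they generate acts freely on the torus `T^n`: for every nonempty
`S ⊆ {1,…,n}` and every `z ∈ T^n`, `(∏_{i ∈ S} a_i)(z) ≠ z`. -/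
theorem bott_involutions_commute_and_free {n : ℕ}
    (A : Matrix (Fin n) (Fin n) (ZMod 2)) (hA : IsBott A) :
    (∀ i j : Fin n, aMap A i ∘ aMap A j = aMap A j ∘ aMap A i) ∧
    (∀ S : Finset (Fin n), S.Nonempty →
      ∀ z : Fin n → ℂ, (∀ i, ‖z i‖ = 1) → prodMap A S z ≠ z) := by
  obtain ⟨σ, B, hB, hAe⟩ := hA
  have hentry : ∀ i j : Fin n, A i j = B (σ i) (σ j) := by
    intro i j
    rw [hAe]
    simp [Equiv.Perm.permMatrix, PEquiv.toMatrix_toPEquiv_mul, PEquiv.mul_toMatrix_toPEquiv, Equiv.Perm.inv_def]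
  constructor
  · intro i j
    funext z k
    simp only [Function.comp_apply, aMap]
    by_cases hki : k = i <;> by_cases hkj : k = j
    · subst hki; subst hkj; rfl
    · subst hki
      simp [if_neg hkj, conjPow_neg]
    · subst hkj
      simp [if_neg hki, conjPow_neg]
    · simp only [if_neg hki, if_neg hkj, conjPow_comm]
  · intro S hS z hz hcontra
    obtain ⟨i₀, hi₀S, hi₀min⟩ := S.exists_min_image σ hS
    have hA0 : ∀ j ∈ (S.sort (· ≤ ·)), A j i₀ = 0 := by
      intro j hj
      rw [Finset.mem_sort] at hj
      rw [hentry]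
      exact hB _ _ (hi₀min j hj)
    have key := foldr_apply_eq A (S.sort (· ≤ ·)) i₀ z hA0
    have hcount : (S.sort (· ≤ ·)).count i₀ = 1 :=
      List.count_eq_one_of_mem (S.sort_nodup _) ((Finset.mem_sort _).2 hi₀S)
    rw [hcount] at key
    have : prodMap A S z i₀ = -z i₀ := by
      rw [prodMap, key]; ring
    rw [hcontra] at this
    have hz0 : z i₀ ≠ 0 := by
      intro h; have := hz i₀; rw [h] at this; simp at this
    have : (2 : ℂ) * z i₀ = 0 := by linear_combination this
    simp [hz0] at this
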